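/- arXiv:2107.00371 — 2 statements merged into one kernel-verified Lean document; each statement's English description precedes it below -/
import Mathlib

section
/- Let k ≥ 2 and p = p_1 + ... + p_k. Let Σ ∈ R^{p×p} be the symmetric block matrix with diagonal blocks Σ_{ii} = U_i U_i^T + Ψ_{ii} and off-diagonal blocks Σ_{ij} = U_i U_j^T (i ≠ j), where U_i ∈ R^{p_i×r} and each Ψ_{ii} ∈ R^{p_i×p_i} is symmetric positive definite, and let Σ0 = diag(Σ_{11},...,Σ_{kk}) be its block-diagonal part. Let A = [A_1^T, ..., A_k^T]^T ∈ R^{p×r} (with A_i ∈ R^{p_i×r}) satisfy Σ0^{-1} Σ A = A Λ_r and A^T Σ0 A = I_r, where Λ_r = diag(λ_1, ..., λ_r) contains the r largest generalized eigenvalues of Σ with respect to Σ0. If λ_r > 1, then for every i ∈ {1,...,k} the column space of A_i is contained in the column space of Σ_{ii}^{-1} U_i; moreover, for any i such that rank(A_i) = r, the two column spaces are equal. -/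
open MeasureTheory ProbabilityTheory Matrix Real
open scoped Classical

noncomputable section

/-- Frobenius norm of a real matrix. -/
def frob {m n : ℕ} (M : Matrix (Fin m) (Fin n) ℝ) : ℝ :=
  Real.sqrt (∑ i, ∑ j, (M i j) ^ 2)

/-- Distance between `p × r` matrices modulo right multiplication by an orthogonal matrix:
`dist(U,V) = min_{P ∈ O(r)} ‖U P - V‖_F`. -/
def gdist {p r : ℕ} (U V : Matrix (Fin p) (Fin r) ℝ) : ℝ :=
  sInf {x : ℝ | ∃ P : Matrix (Fin r) (Fin r) ℝ, Pᵀ * P = 1 ∧ x = frob (U * P - V)}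

/-- Centered multivariate Gaussian with covariance `S`, as the law of `S^{1/2} z` for a
standard Gaussian vector `z`. -/
def mvGaussian {m : ℕ} (S : Matrix (Fin m) (Fin m) ℝ) : Measure (Fin m → ℝ) :=
  if h : S.PosSemidef then
    (Measure.pi fun _ : Fin m => gaussianReal 0 1).map fun z => ((h.1.eigenvectorUnitary : Matrix (Fin m) (Fin m) ℝ) *
      Matrix.diagonal (fun i => Real.sqrt (h.1.eigenvalues i)) *
      (star h.1.eigenvectorUnitary : Matrix (Fin m) (Fin m) ℝ)).mulVec z
  else 0

/-- Law of `n` i.i.d. samples from `N_m(0, S)`. -/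
def iidLaw (n : ℕ) {m : ℕ} (S : Matrix (Fin m) (Fin m) ℝ) : Measure (Fin n → Fin m → ℝ) :=
  Measure.pi fun _ : Fin n => mvGaussian S

def sampleMean {n m : ℕ} (X : Fin n → Fin m → ℝ) (i : Fin m) : ℝ := (∑ t, X t i) / n

/-- Sample covariance matrix. -/
def sampleCov {n m : ℕ} (X : Fin n → Fin m → ℝ) : Matrix (Fin m) (Fin m) ℝ :=
  Matrix.of fun i j => (∑ t, (X t i - sampleMean X i) * (X t j - sampleMean X j)) / n

/-- Block-diagonal part of a matrix with respect to block labels `β`. -/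
def blockPart {m k : ℕ} (β : Fin m → Fin k) (M : Matrix (Fin m) (Fin m) ℝ) :
    Matrix (Fin m) (Fin m) ℝ :=
  Matrix.of fun i j => if β i = β j then M i j else 0

/-- Rows of `M` belonging to block `i`, all other rows zeroed out. -/
def restrictRows {m k c : ℕ} (β : Fin m → Fin k) (i : Fin k) (M : Matrix (Fin m) (Fin c) ℝ) :
    Matrix (Fin m) (Fin c) ℝ :=
  Matrix.of fun a b => if β a = i then M a b else 0

/-- ℓ₂ norm of row `i` of `M`. -/
def rowNorm {m r : ℕ} (M : Matrix (Fin m) (Fin r) ℝ) (i : Fin m) : ℝ :=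
  Real.sqrt (∑ j, (M i j) ^ 2)

/-- Set of indices of nonzero rows. -/
def rowSupport {m r : ℕ} (M : Matrix (Fin m) (Fin r) ℝ) : Set (Fin m) := {i | M i ≠ 0}

/-- `W'` is the hard thresholding of `W` keeping the `k` rows of largest ℓ₂ norm
(ties broken toward smaller indices). -/
def IsHT {m r : ℕ} (W : Matrix (Fin m) (Fin r) ℝ) (k : ℕ) (W' : Matrix (Fin m) (Fin r) ℝ) : Prop :=
  ∃ C : Finset (Fin m), C.card = min k m ∧ (∀ i ∈ C, W' i = W i) ∧ (∀ i ∉ C, W' i = 0) ∧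
    ∀ i ∈ C, ∀ j ∉ C, rowNorm W j < rowNorm W i ∨ (rowNorm W j = rowNorm W i ∧ i < j)

/-- Positive semidefinite square root (junk value `0` if not psd). -/
def psqrt {r : ℕ} (M : Matrix (Fin r) (Fin r) ℝ) : Matrix (Fin r) (Fin r) ℝ :=
  if h : M.PosSemidef then
    (h.1.eigenvectorUnitary : Matrix (Fin r) (Fin r) ℝ) *
      Matrix.diagonal (fun i => Real.sqrt (h.1.eigenvalues i)) *
      (star h.1.eigenvectorUnitary : Matrix (Fin r) (Fin r) ℝ)
  else 0

/-- Inverse square root. -/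
def invSqrt {r : ℕ} (M : Matrix (Fin r) (Fin r) ℝ) : Matrix (Fin r) (Fin r) ℝ := (psqrt M)⁻¹

/-- Nuclear norm `Tr √(Mᵀ M)`. -/
def nucNorm {a b : ℕ} (M : Matrix (Fin a) (Fin b) ℝ) : ℝ := (psqrt (Mᵀ * M)).trace

/-- Entrywise ℓ₁ norm. -/
def l1Norm {a b : ℕ} (M : Matrix (Fin a) (Fin b) ℝ) : ℝ := ∑ i, ∑ j, |M i j|

/-- Entrywise sup norm. -/
def maxAbs {a b : ℕ} (M : Matrix (Fin a) (Fin b) ℝ) : ℝ := sSup {x : ℝ | ∃ i j, x = |M i j|}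

/-- Membership in the Fantope `{X : 0 ⪯ X ⪯ I, Tr X = r}`. -/
def InFantope {p : ℕ} (r : ℕ) (X : Matrix (Fin p) (Fin p) ℝ) : Prop :=
  X.PosSemidef ∧ (1 - X).PosSemidef ∧ X.trace = (r : ℝ)

/-- `F` minimizes `-⟨Sh, ·⟩ + ρ ‖·‖_1` over symmetric matrices whose conjugation by
`S0h^{1/2}` lies in the Fantope. -/
def IsFantopeMin {p : ℕ} (r : ℕ) (Sh S0h : Matrix (Fin p) (Fin p) ℝ) (ρ : ℝ)
    (F : Matrix (Fin p) (Fin p) ℝ) : Prop :=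
  F.IsSymm ∧ InFantope r (psqrt S0h * F * psqrt S0h) ∧
    ∀ G : Matrix (Fin p) (Fin p) ℝ, G.IsSymm → InFantope r (psqrt S0h * G * psqrt S0h) →
      -(Shᵀ * F).trace + ρ * l1Norm F ≤ -(Shᵀ * G).trace + ρ * l1Norm G

/-- `L` maximizes `⟨Sh, L Lᵀ⟩` subject to `Lᵀ S0h L = I_r` and row support inside `I`. -/
def IsRestrictedMax {p r : ℕ} (Sh S0h : Matrix (Fin p) (Fin p) ℝ) (I : Finset (Fin p))
    (L : Matrix (Fin p) (Fin r) ℝ) : Prop :=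
  Lᵀ * S0h * L = 1 ∧ (∀ i ∉ I, L i = 0) ∧
    ∀ L' : Matrix (Fin p) (Fin r) ℝ, L'ᵀ * S0h * L' = 1 → (∀ i ∉ I, L' i = 0) →
      (Shᵀ * (L' * L'ᵀ)).trace ≤ (Shᵀ * (L * Lᵀ)).trace

/-- Kullback–Leibler divergence `∫ log (dP/dQ) dP`. -/
def klDivR {α : Type*} [MeasurableSpace α] (P Q : Measure α) : ℝ :=
  ∫ x, Real.log (P.rnDeriv Q x).toReal ∂P


section Helpers

variable {m k c r : ℕ} (β : Fin m → Fin k)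

lemma blockPart_zero_of {B : Matrix (Fin m) (Fin m) ℝ} (hB : blockPart β B = B)
    {x y : Fin m} (h : β x ≠ β y) : B x y = 0 := by
  rw [← hB]; simp [blockPart, h]

lemma blockPart_one : blockPart β (1 : Matrix (Fin m) (Fin m) ℝ) = 1 := by
  ext a b
  by_cases h : a = b <;> simp [blockPart, Matrix.one_apply, h]

lemma blockPart_add (M N : Matrix (Fin m) (Fin m) ℝ) :
    blockPart β (M + N) = blockPart β M + blockPart β N := by
  ext a b; by_cases h : β a = β b <;> simp [blockPart, h]

lemma blockPart_mul_right (X B : Matrix (Fin m) (Fin m) ℝ) (hB : blockPart β B = B) :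
    blockPart β (X * B) = blockPart β X * B := by
  ext a b
  simp only [blockPart, Matrix.of_apply, Matrix.mul_apply]
  by_cases h : β a = β b
  · rw [if_pos h]
    apply Finset.sum_congr rfl
    intro x _
    by_cases hx : β a = β x
    · rw [if_pos hx]
    · rw [if_neg hx, zero_mul,
        blockPart_zero_of β hB (fun e => hx (h.trans e.symm)), mul_zero]
  · rw [if_neg h]
    symm
    apply Finset.sum_eq_zero
    intro x _
    by_cases hx : β a = β x
    · rw [if_pos hx, blockPart_zero_of β hB (fun e => h (hx.trans e)), mul_zero]
    · rw [if_neg hx, zero_mul]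

lemma restrictRows_mul_right (i : Fin k) (M : Matrix (Fin m) (Fin m) ℝ)
    (N : Matrix (Fin m) (Fin c) ℝ) :
    restrictRows β i (M * N) = restrictRows β i M * N := by
  ext a b
  by_cases h : β a = i <;>
    simp [restrictRows, h, Matrix.mul_apply]

lemma restrictRows_sub (i : Fin k) (M N : Matrix (Fin m) (Fin c) ℝ) :
    restrictRows β i (M - N) = restrictRows β i M - restrictRows β i N := by
  ext a b; by_cases h : β a = i <;> simp [restrictRows, h]

lemma block_mul_restrictRows (i : Fin k) (B : Matrix (Fin m) (Fin m) ℝ)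
    (hB : blockPart β B = B) (M : Matrix (Fin m) (Fin c) ℝ) :
    B * restrictRows β i M = restrictRows β i (B * M) := by
  ext a b
  simp only [restrictRows, Matrix.of_apply, Matrix.mul_apply]
  by_cases h : β a = i
  · rw [if_pos h]
    apply Finset.sum_congr rfl
    intro x _
    by_cases hx : β x = i
    · rw [if_pos hx]
    · rw [if_neg hx, mul_zero,
        blockPart_zero_of β hB (fun e => hx (e.symm.trans h)), zero_mul]
  · rw [if_neg h]
    apply Finset.sum_eq_zero
    intro x _
    by_cases hx : β x = i
    · rw [if_pos hx, blockPart_zero_of β hB (fun e => h (e.trans hx)), zero_mul]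
    · rw [if_neg hx, mul_zero]

lemma restrictRows_blockPart_sq (i : Fin k) (U : Matrix (Fin m) (Fin r) ℝ) :
    restrictRows β i (blockPart β (U * Uᵀ)) = restrictRows β i U * (restrictRows β i U)ᵀ := by
  ext a b
  simp only [restrictRows, blockPart, Matrix.of_apply, Matrix.mul_apply, Matrix.transpose_apply]
  by_cases h : β a = i
  · rw [if_pos h]
    by_cases hb : β b = i
    · rw [if_pos (h.trans hb.symm)]
      apply Finset.sum_congr rfl
      intro x _
      rw [if_pos h, if_pos hb]
    · rw [if_neg (fun e : β a = β b => hb (e.symm.trans h))]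
      symm; apply Finset.sum_eq_zero; intro x _
      rw [if_neg hb, mul_zero]
  · rw [if_neg h]
    symm; apply Finset.sum_eq_zero; intro x _
    rw [if_neg h, zero_mul]

lemma blockPart_sq_eq_sum (U : Matrix (Fin m) (Fin r) ℝ) :
    blockPart β (U * Uᵀ) = ∑ i : Fin k, restrictRows β i U * (restrictRows β i U)ᵀ := by
  ext a b
  simp only [blockPart, Matrix.of_apply, Matrix.sum_apply, Matrix.mul_apply,
    Matrix.transpose_apply, restrictRows]
  rw [Finset.sum_eq_single (β a)]
  · by_cases h : β a = β b
    · rw [if_pos h]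
      apply Finset.sum_congr rfl
      intro x _
      rw [if_pos rfl, if_pos h.symm]
    · rw [if_neg h]
      symm
      apply Finset.sum_eq_zero
      intro x _
      rw [if_neg (fun e : β b = β a => h e.symm), mul_zero]
  · intro x _ hx
    apply Finset.sum_eq_zero
    intro j _
    rw [if_neg (fun e : β a = x => hx e.symm), zero_mul]
  · simp

lemma blockPart_sq_posSemidef (U : Matrix (Fin m) (Fin r) ℝ) :
    (blockPart β (U * Uᵀ)).PosSemidef := by
  rw [blockPart_sq_eq_sum]
  apply Finset.sum_induction _ Matrix.PosSemidef
  · exact fun _ _ h1 h2 => h1.add h2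
  · exact Matrix.PosSemidef.zero
  · intro i _
    have := Matrix.posSemidef_self_mul_conjTranspose (restrictRows β i U)
    simpa using this

lemma blockPart_inv (B : Matrix (Fin m) (Fin m) ℝ) (hB : blockPart β B = B)
    (hdet : IsUnit B.det) : blockPart β B⁻¹ = B⁻¹ := by
  have h1 : blockPart β B⁻¹ * B = 1 := by
    rw [← blockPart_mul_right β B⁻¹ B hB, Matrix.nonsing_inv_mul B hdet, blockPart_one]
  exact Matrix.inv_eq_left_inv h1 ▸ rfl

lemma isUnit_of_rank_eq (C : Matrix (Fin r) (Fin r) ℝ) (h : C.rank = r) : IsUnit C := by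
  have hr : LinearMap.range C.mulVecLin = ⊤ := by
    apply Submodule.eq_top_of_finrank_eq
    rw [← Matrix.rank, h]
    simp
  have h2 : IsUnit C.mulVecLin := (LinearMap.isUnit_iff_range_eq_top _).2 hr
  have heq : Matrix.toLinAlgEquiv' C = C.mulVecLin := by
    ext v j
    simp [Matrix.toLinAlgEquiv'_apply, Matrix.mulVecLin_apply]
  have h3 : IsUnit (Matrix.toLinAlgEquiv' C) := heq ▸ h2
  have := h3.map (Matrix.toLinAlgEquiv' (n := Fin r) (R := ℝ)).symm
  simpa using this


lemma restrictRows_mul_right' {d : ℕ} (i : Fin k) (M : Matrix (Fin m) (Fin c) ℝ)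
    (N : Matrix (Fin c) (Fin d) ℝ) :
    restrictRows β i (M * N) = restrictRows β i M * N := by
  ext a b
  by_cases h : β a = i <;>
    simp [restrictRows, h, Matrix.mul_apply]

lemma blockPart_idem (M : Matrix (Fin m) (Fin m) ℝ) :
    blockPart β (blockPart β M) = blockPart β M := by
  ext a b; by_cases h : β a = β b <;> simp [blockPart, h]

end Helpers

/-- identification of the GCA loading spaces in the latent variable model. -/
theorem statement0
    (k p r : ℕ) (hk : 2 ≤ k) (hr : 1 ≤ r) (hrp : r ≤ p)
    (p_ : Fin k → ℕ) (hp : p = ∑ i, p_ i)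
    (β : Fin p → Fin k) (hβ : ∀ i : Fin k, ({a : Fin p | β a = i}).ncard = p_ i)
    (U : Matrix (Fin p) (Fin r) ℝ)
    (Ψ : Matrix (Fin p) (Fin p) ℝ) (hΨblock : blockPart β Ψ = Ψ) (hΨpd : Ψ.PosDef)
    (S S0 : Matrix (Fin p) (Fin p) ℝ)
    (hS : S = U * Uᵀ + Ψ) (hS0 : S0 = blockPart β S)
    -- generalized eigendecomposition of `S` w.r.t. `S0`, eigenvalues sorted decreasingly
    (K : Matrix (Fin p) (Fin p) ℝ) (lam : Fin p → ℝ) (hlam : Antitone lam)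
    (hKnorm : Kᵀ * S0 * K = 1) (hKdec : S = S0 * K * Matrix.diagonal lam * Kᵀ * S0)
    -- `A` carries the `r` leading generalized eigenvalues and is `S0`-orthonormal
    (A : Matrix (Fin p) (Fin r) ℝ)
    (hA1 : S0⁻¹ * S * A = A * Matrix.diagonal (fun j : Fin r => lam (Fin.castLE hrp j)))
    (hA2 : Aᵀ * S0 * A = 1)
    (hgt1 : 1 < lam ⟨r - 1, by omega⟩) :
    (∀ i : Fin k, ∃ Cmat : Matrix (Fin r) (Fin r) ℝ,
        restrictRows β i A = restrictRows β i (S0⁻¹ * U) * Cmat) ∧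
    (∀ i : Fin k, (restrictRows β i A).rank = r →
      ∃ Dmat : Matrix (Fin r) (Fin r) ℝ,
        restrictRows β i (S0⁻¹ * U) = restrictRows β i A * Dmat) := by
  -- abbreviations
  set D := Matrix.diagonal (fun j : Fin r => lam (Fin.castLE hrp j)) with hD
  have hlamgt : ∀ j : Fin r, 1 < lam (Fin.castLE hrp j) := by
    intro j
    refine lt_of_lt_of_le hgt1 (hlam ?_)
    rw [Fin.le_def]
    simp only [Fin.coe_castLE]
    omega
  set E := D - (1 : Matrix (Fin r) (Fin r) ℝ) with hEdef
  have hE : E = Matrix.diagonal (fun j : Fin r => lam (Fin.castLE hrp j) - 1) := by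
    rw [hEdef, hD, ← Matrix.diagonal_one, Matrix.diagonal_sub]
  have hEdet : IsUnit E.det := by
    rw [hE, Matrix.det_diagonal, isUnit_iff_ne_zero]
    apply Finset.prod_ne_zero_iff.2
    intro j _
    have := hlamgt j
    linarith
  have hS0eq : S0 = blockPart β (U * Uᵀ) + Ψ := by
    rw [hS0, hS, blockPart_add, hΨblock]
  have hS0pd : S0.PosDef := by
    rw [hS0eq]
    exact Matrix.PosDef.posSemidef_add (blockPart_sq_posSemidef β U) hΨpd
  have hS0det : IsUnit S0.det := isUnit_iff_ne_zero.2 (ne_of_gt hS0pd.det_pos)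
  have hS0block : blockPart β S0 = S0 := by rw [hS0]; exact blockPart_idem β S
  have hS0invblock : blockPart β S0⁻¹ = S0⁻¹ := blockPart_inv β S0 hS0block hS0det
  have hSA : S * A = S0 * (A * D) := by
    have h1 := congrArg (fun M => S0 * M) hA1
    rw [← Matrix.mul_assoc, ← Matrix.mul_assoc, Matrix.mul_nonsing_inv S0 hS0det,
      Matrix.one_mul] at h1
    exact h1
  have hstep : S0 * A * E = (S - S0) * A := by
    rw [hEdef, Matrix.mul_sub, Matrix.mul_one, Matrix.sub_mul]
    rw [Matrix.mul_assoc, ← hSA]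
  have hSsub : S - S0 = U * Uᵀ - blockPart β (U * Uᵀ) := by
    rw [hS0eq, hS]; abel
  -- main construction
  have hmain : ∀ i : Fin k,
      restrictRows β i A =
        restrictRows β i (S0⁻¹ * U) * ((Uᵀ - (restrictRows β i U)ᵀ) * A * E⁻¹) := by
    intro i
    set W := (Uᵀ - (restrictRows β i U)ᵀ) * A with hW
    have key : restrictRows β i (S0 * A) * E = restrictRows β i U * W := by
      rw [← restrictRows_mul_right' β i (S0 * A) E, hstep, hSsub,
        restrictRows_mul_right β i _ A, restrictRows_sub,
        restrictRows_mul_right' β i U Uᵀ, restrictRows_blockPart_sq β i U, hW]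
      simp [Matrix.sub_mul, Matrix.mul_sub, Matrix.mul_assoc]
    have key2 : restrictRows β i (S0 * A) = restrictRows β i U * (W * E⁻¹) := by
      have := congrArg (fun M => M * E⁻¹) key
      rw [Matrix.mul_assoc, Matrix.mul_nonsing_inv E hEdet, Matrix.mul_one] at this
      rw [this, Matrix.mul_assoc]
    have hAeq : A = S0⁻¹ * (S0 * A) := by
      rw [← Matrix.mul_assoc, Matrix.nonsing_inv_mul S0 hS0det, Matrix.one_mul]
    calc restrictRows β i A = restrictRows β i (S0⁻¹ * (S0 * A)) := by rw [← hAeq]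
      _ = S0⁻¹ * restrictRows β i (S0 * A) :=
        (block_mul_restrictRows β i S0⁻¹ hS0invblock (S0 * A)).symm
      _ = S0⁻¹ * (restrictRows β i U * (W * E⁻¹)) := by rw [key2]
      _ = (S0⁻¹ * restrictRows β i U) * (W * E⁻¹) := (Matrix.mul_assoc _ _ _).symm
      _ = restrictRows β i (S0⁻¹ * U) * (W * E⁻¹) := by
        rw [block_mul_restrictRows β i S0⁻¹ hS0invblock U]
  constructor
  · exact fun i => ⟨_, hmain i⟩
  · intro i hrank
    set C := (Uᵀ - (restrictRows β i U)ᵀ) * A * E⁻¹ with hC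
    have hCrank : C.rank = r := by
      have h1 : (restrictRows β i A).rank ≤ C.rank := by
        rw [hmain i]
        exact Matrix.rank_mul_le_right _ _
      have h2 : C.rank ≤ r := by
        have := Matrix.rank_le_card_width C
        simpa using this
      omega
    have hCunit : IsUnit C := isUnit_of_rank_eq C hCrank
    have hCdet : IsUnit C.det := (Matrix.isUnit_iff_isUnit_det C).1 hCunit
    refine ⟨C⁻¹, ?_⟩
    rw [hmain i, Matrix.mul_assoc, Matrix.mul_nonsing_inv C hCdet, Matrix.mul_one]


end
end

section
/- Let k ≥ 2, p = p_1 + ... + p_k, and let Σ ∈ R^{p×p} be the block matrix with diagonal blocks Σ_{ii} = U_i U_i^T + Ψ_{ii} and off-diagonal blocks Σ_{ij} = U_i U_j^T (i ≠ j), where U_i ∈ R^{p_i×r}, each Ψ_{ii} is symmetric positive definite, and Σ0 = diag(Σ_{11},...,Σ_{kk}). Let U = [U_1^T, ..., U_k^T]^T ∈ R^{p×r}. Assume (a) rank(U) = r, and (b) σ_r(Σ0^{-1/2} U) ≥ 1, where σ_r denotes the r-th largest singular value. Then exactly r of the generalized eigenvalues λ_1 ≥ ... ≥ λ_p of Σ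 with respect to Σ0 are strictly greater than 1, i.e. r = max{ j ∈ [p] : λ_j > 1 }. -/
open MeasureTheory ProbabilityTheory Matrix Real
open scoped Classical

noncomputable section

private lemma quad_conj {p q : ℕ} (K : Matrix (Fin p) (Fin q) ℝ) (M : Matrix (Fin p) (Fin p) ℝ)
    (c : Fin q → ℝ) : c ⬝ᵥ (Kᵀ * M * K).mulVec c = (K.mulVec c) ⬝ᵥ M.mulVec (K.mulVec c) := by
  rw [Matrix.mul_assoc, ← Matrix.mulVec_mulVec, Matrix.dotProduct_mulVec,
    Matrix.vecMul_transpose, ← Matrix.mulVec_mulVec]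

private lemma quad_gram {p q : ℕ} (V : Matrix (Fin p) (Fin q) ℝ) (x : Fin p → ℝ) :
    x ⬝ᵥ (V * Vᵀ).mulVec x = (Vᵀ.mulVec x) ⬝ᵥ (Vᵀ.mulVec x) := by
  rw [← Matrix.mulVec_mulVec, Matrix.dotProduct_mulVec, ← Matrix.mulVec_transpose]

private def extZero {n p : ℕ} (h : n ≤ p) : (Fin n → ℝ) →ₗ[ℝ] (Fin p → ℝ) where
  toFun d a := if ha : (a : ℕ) < n then d ⟨a, ha⟩ else 0
  map_add' d e := by funext a; by_cases ha : (a : ℕ) < n <;> simp [ha]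
  map_smul' m d := by funext a; by_cases ha : (a : ℕ) < n <;> simp [ha]

private lemma quad_gram2 {p q : ℕ} (V : Matrix (Fin p) (Fin q) ℝ) (u : Fin q → ℝ) :
    u ⬝ᵥ (Vᵀ * V).mulVec u = (V.mulVec u) ⬝ᵥ (V.mulVec u) := by
  have h := quad_gram Vᵀ u
  rwa [Matrix.transpose_transpose] at h

private lemma blockPart_gram {p r k : ℕ} (β : Fin p → Fin k) (U : Matrix (Fin p) (Fin r) ℝ) :
    blockPart β (U * Uᵀ) = ∑ i : Fin k, restrictRows β i U * (restrictRows β i U)ᵀ := by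
  ext a b
  simp only [blockPart, restrictRows, Matrix.of_apply, Matrix.sum_apply, Matrix.mul_apply,
    Matrix.transpose_apply, ite_mul, mul_ite, zero_mul, mul_zero]
  rw [Finset.sum_comm]
  by_cases h : β a = β b <;> simp [h, Finset.sum_ite_eq]

private lemma not_injective_of_lt {a b : ℕ} (f : (Fin a → ℝ) →ₗ[ℝ] (Fin b → ℝ)) (h : b < a) :
    ∃ u : Fin a → ℝ, u ≠ 0 ∧ f u = 0 := by
  have hni : ¬ Function.Injective f := by
    intro hinj
    have := LinearMap.finrank_le_finrank_of_injective hinj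
    simp [Module.finrank_pi] at this
    omega
  obtain ⟨x, y, hxy, hne⟩ := Function.not_injective_iff.mp hni
  exact ⟨x - y, sub_ne_zero.mpr hne, by rw [map_sub, hxy, sub_self]⟩

/-- exactly `r` generalized eigenvalues exceed one in the latent variable model. -/
theorem statement1
    (k p r : ℕ) (hk : 2 ≤ k) (hr : 1 ≤ r) (hrp : r ≤ p)
    (p_ : Fin k → ℕ) (hp : p = ∑ i, p_ i)
    (β : Fin p → Fin k) (hβ : ∀ i : Fin k, ({a : Fin p | β a = i}).ncard = p_ i)
    (U : Matrix (Fin p) (Fin r) ℝ)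
    (Ψ : Matrix (Fin p) (Fin p) ℝ) (hΨblock : blockPart β Ψ = Ψ) (hΨpd : Ψ.PosDef)
    (S S0 : Matrix (Fin p) (Fin p) ℝ)
    (hS : S = U * Uᵀ + Ψ) (hS0 : S0 = blockPart β S)
    (K : Matrix (Fin p) (Fin p) ℝ) (lam : Fin p → ℝ) (hlam : Antitone lam)
    (hKnorm : Kᵀ * S0 * K = 1) (hKdec : S = S0 * K * Matrix.diagonal lam * Kᵀ * S0)
    -- Assumption (a): `U` has full column rank
    (hUrank : U.rank = r)
    -- Assumption (b): `σ_r(S0^{-1/2} U) ≥ 1`, i.e. `λ_min(Uᵀ S0⁻¹ U) ≥ 1`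
    (hsig : ∀ v : Fin r → ℝ, (∑ j, v j ^ 2) ≤ v ⬝ᵥ (Uᵀ * S0⁻¹ * U).mulVec v) :
    (∀ j : Fin p, (j : ℕ) < r → 1 < lam j) ∧ (∀ j : Fin p, r ≤ (j : ℕ) → lam j ≤ 1) := by
  classical
  -- Basic identities
  have hKSK : Kᵀ * S * K = Matrix.diagonal lam := by
    have : Kᵀ * S * K = (Kᵀ * S0 * K) * Matrix.diagonal lam * (Kᵀ * S0 * K) := by
      rw [hKdec]; simp only [Matrix.mul_assoc]
    rw [this, hKnorm, Matrix.one_mul, Matrix.mul_one]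
  have hKK : K * (Kᵀ * S0) = 1 := mul_eq_one_comm.mp hKnorm
  have hS0inv : S0⁻¹ = K * Kᵀ := by
    apply Matrix.inv_eq_left_inv
    rw [Matrix.mul_assoc]; exact hKK
  have hS0eq : S0 = blockPart β (U * Uᵀ) + Ψ := by
    rw [hS0, hS]
    ext a b
    have hΨa : (if β a = β b then Ψ a b else 0) = Ψ a b := congrFun (congrFun hΨblock a) b
    by_cases h : β a = β b <;>
      simp only [blockPart, Matrix.of_apply, Matrix.add_apply, h, if_true, if_false,
        zero_add] at hΨa ⊢
    exact hΨa
  -- positivity facts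
  have hDpsd : ∀ x : Fin p → ℝ, 0 ≤ x ⬝ᵥ (blockPart β (U * Uᵀ)).mulVec x := by
    intro x
    rw [blockPart_gram]
    have hmv : (∑ i : Fin k, restrictRows β i U * (restrictRows β i U)ᵀ) *ᵥ x
        = ∑ i : Fin k, (restrictRows β i U * (restrictRows β i U)ᵀ) *ᵥ x := by
      ext j
      simp only [Matrix.mulVec, dotProduct, Matrix.sum_apply, Finset.sum_mul,
        Finset.sum_apply]
      exact Finset.sum_comm
    rw [hmv]
    have hdp : x ⬝ᵥ (∑ i : Fin k, (restrictRows β i U * (restrictRows β i U)ᵀ) *ᵥ x)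
        = ∑ i : Fin k, x ⬝ᵥ ((restrictRows β i U * (restrictRows β i U)ᵀ) *ᵥ x) := by
      simp only [dotProduct, Finset.sum_apply, Finset.mul_sum]
      exact Finset.sum_comm
    rw [hdp]
    apply Finset.sum_nonneg
    intro i _
    rw [quad_gram]
    exact Finset.sum_nonneg fun t _ => mul_self_nonneg _
  have hΨpos : ∀ x : Fin p → ℝ, x ≠ 0 → 0 < x ⬝ᵥ Ψ.mulVec x := by
    intro x hx
    have := hΨpd.dotProduct_mulVec_pos hx
    simpa using this
  -- quadratic form computations
  have hqS : ∀ c : Fin p → ℝ,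
      (K.mulVec c) ⬝ᵥ S.mulVec (K.mulVec c) = ∑ i, lam i * c i ^ 2 := by
    intro c
    rw [← quad_conj, hKSK]
    simp only [dotProduct, Matrix.mulVec_diagonal]
    exact Finset.sum_congr rfl fun i _ => by ring
  have hqS0 : ∀ c : Fin p → ℝ,
      (K.mulVec c) ⬝ᵥ S0.mulVec (K.mulVec c) = ∑ i, c i ^ 2 := by
    intro c
    rw [← quad_conj, hKnorm]
    simp [dotProduct, sq]
  have hSdec : ∀ x : Fin p → ℝ,
      x ⬝ᵥ S.mulVec x = (Uᵀ.mulVec x) ⬝ᵥ (Uᵀ.mulVec x) + x ⬝ᵥ Ψ.mulVec x := by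
    intro x
    rw [hS, Matrix.add_mulVec, dotProduct_add, quad_gram]
  have hS0dec : ∀ x : Fin p → ℝ,
      x ⬝ᵥ S0.mulVec x = x ⬝ᵥ (blockPart β (U * Uᵀ)).mulVec x + x ⬝ᵥ Ψ.mulVec x := by
    intro x
    rw [hS0eq, Matrix.add_mulVec, dotProduct_add]
  have hKinj : ∀ c : Fin p → ℝ, K.mulVec c = 0 → c = 0 := by
    intro c hc
    have h1 : (Kᵀ * S0).mulVec (K.mulVec c) = c := by
      rw [Matrix.mulVec_mulVec, hKnorm, Matrix.one_mulVec]
    rw [hc, Matrix.mulVec_zero] at h1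
    exact h1.symm
  constructor
  · -- first r eigenvalues exceed 1
    intro j hj
    by_contra hcon
    push_neg at hcon  -- lam j ≤ 1
    set B := Kᵀ * U with hB
    have hjp : (j : ℕ) ≤ p := j.isLt.le
    obtain ⟨u, hu, hfu⟩ := not_injective_of_lt
      ((LinearMap.funLeft ℝ ℝ (Fin.castLE hjp)).comp B.mulVecLin) hj
    set c := B.mulVec u with hc
    have hczero : ∀ i : Fin p, (i : ℕ) < (j : ℕ) → c i = 0 := by
      intro i hi
      have := congrFun hfu ⟨(i : ℕ), hi⟩
      simpa [LinearMap.funLeft, Fin.castLE, Fin.ext_iff] using this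
    set x := K.mulVec c with hx
    have h1 : x ⬝ᵥ S.mulVec x ≤ x ⬝ᵥ S0.mulVec x := by
      rw [hqS c, hqS0 c]
      apply Finset.sum_le_sum
      intro i _
      by_cases hci : c i = 0
      · simp [hci]
      · have hij : j ≤ i := by
          by_contra hh
          push_neg at hh
          exact hci (hczero i hh)
        have hli : lam i ≤ 1 := (hlam hij).trans hcon
        nlinarith [sq_nonneg (c i)]
    set A := Uᵀ * S0⁻¹ * U with hA
    have hABB : A = Bᵀ * B := by
      rw [hA, hB, hS0inv, Matrix.transpose_mul, Matrix.transpose_transpose]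
      simp only [Matrix.mul_assoc]
    have hUx : Uᵀ.mulVec x = A.mulVec u := by
      rw [hx, hc, Matrix.mulVec_mulVec, Matrix.mulVec_mulVec, hABB, hB,
        Matrix.transpose_mul, Matrix.transpose_transpose, Matrix.mul_assoc]
    have ht : x ⬝ᵥ S0.mulVec x = u ⬝ᵥ A.mulVec u := by
      rw [hqS0 c, hABB, quad_gram2 B u, ← hc]
      simp [dotProduct, sq]
    have htpos : 0 < u ⬝ᵥ A.mulVec u := by
      have hs := hsig u
      have hsum : 0 < ∑ i, u i ^ 2 := by
        obtain ⟨i0, hi0⟩ := Function.ne_iff.mp hu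
        have hi0' : u i0 ≠ 0 := by simpa using hi0
        exact Finset.sum_pos' (fun i _ => sq_nonneg _)
          ⟨i0, Finset.mem_univ _,
            lt_of_le_of_ne (sq_nonneg _) (Ne.symm (pow_ne_zero 2 hi0'))⟩
      calc (0:ℝ) < ∑ i, u i ^ 2 := hsum
        _ ≤ _ := hs
    have hCS : u ⬝ᵥ A.mulVec u ≤ (A.mulVec u) ⬝ᵥ (A.mulVec u) := by
      set w := A.mulVec u with hw
      have h2 := Finset.sum_mul_sq_le_sq_mul_sq Finset.univ u w
      have hs := hsig u
      have hdp : u ⬝ᵥ w = ∑ i, u i * w i := rfl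
      have hww : w ⬝ᵥ w = ∑ i, w i ^ 2 := by simp [dotProduct, sq]
      have hww0 : 0 ≤ ∑ i, w i ^ 2 := Finset.sum_nonneg fun i _ => sq_nonneg _
      rw [hdp, hww]
      nlinarith [htpos, hs, h2, hdp]
    have hxne : x ≠ 0 := by
      intro h
      rw [h] at ht
      simp at ht
      exact absurd ht.symm (ne_of_gt htpos)
    have h2 : x ⬝ᵥ S0.mulVec x < x ⬝ᵥ S.mulVec x := by
      rw [hSdec x, hUx, ht]
      have := hΨpos x hxne
      linarith [hCS]
    linarith
  · -- remaining eigenvalues at most 1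
    intro j hj
    by_contra hcon
    push_neg at hcon  -- 1 < lam j
    have hn : (j : ℕ) + 1 ≤ p := j.isLt
    obtain ⟨d, hd, hgd⟩ := not_injective_of_lt
      ((Uᵀ * K).mulVecLin.comp (extZero hn)) (by omega)
    set c := extZero hn d with hc
    have hc0 : (Uᵀ * K).mulVec c = 0 := hgd
    have hcsupp : ∀ i : Fin p, (j : ℕ) < (i : ℕ) → c i = 0 := by
      intro i hi
      simp only [hc, extZero, LinearMap.coe_mk, AddHom.coe_mk]
      rw [dif_neg]
      omega
    have hcne : c ≠ 0 := by
      obtain ⟨i0, hi0⟩ := Function.ne_iff.mp hd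
      intro h
      apply hi0
      have := congrFun h (Fin.castLE hn i0)
      have hi0le : (i0 : ℕ) ≤ j := Nat.lt_succ_iff.mp i0.isLt
      have hle : (⟨(i0 : ℕ), by have := i0.isLt; omega⟩ : Fin p) ≤ j :=
        Fin.le_iff_val_le_val.mpr hi0le
      simpa [hc, extZero, Fin.castLE, hle] using this
    set x := K.mulVec c with hx
    have hxne : x ≠ 0 := fun h => hcne (hKinj c h)
    have hUx : Uᵀ.mulVec x = 0 := by
      rw [hx, Matrix.mulVec_mulVec]
      exact hc0
    have h1 : x ⬝ᵥ S.mulVec x ≤ x ⬝ᵥ S0.mulVec x := by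
      rw [hSdec x, hS0dec x, hUx]
      have := hDpsd x
      simp only [dotProduct_zero]
      linarith
    have h2 : x ⬝ᵥ S0.mulVec x < x ⬝ᵥ S.mulVec x := by
      rw [hqS c, hqS0 c]
      apply Finset.sum_lt_sum
      · intro i _
        by_cases hci : c i = 0
        · simp [hci]
        · have hij : i ≤ j := by
            by_contra hh
            push_neg at hh
            exact hci (hcsupp i hh)
          have hli : 1 < lam i := lt_of_lt_of_le hcon (hlam hij)
          nlinarith [sq_nonneg (c i)]
      · obtain ⟨i0, hi0⟩ := Function.ne_iff.mp hcne
        have hi0' : c i0 ≠ 0 := by simpa using hi0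
        refine ⟨i0, Finset.mem_univ _, ?_⟩
        have hij : i0 ≤ j := by
          by_contra hh
          push_neg at hh
          exact hi0' (hcsupp i0 hh)
        have hli : 1 < lam i0 := lt_of_lt_of_le hcon (hlam hij)
        have h0 : 0 < c i0 ^ 2 := lt_of_le_of_ne (sq_nonneg _) (Ne.symm (pow_ne_zero 2 hi0'))
        nlinarith
    linarith


end
end
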